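/- With W(x) = 2((1 + x₄)² + x₁² + x₂² + x₃²)^{−1} on the closed upper half-space of ℝ⁴, one has lim_{R→∞} (log R)^{−1} ∫_{B⁴₊(0,R)} x₄² |∇W(x)|² dx = 4π², where ∇ is the full Euclidean gradient in ℝ⁴. In particular, the weighted energy ∫ x₄²|∇W|² over the half-ball of radius R diverges logarithmically as R → ∞. -/

import Mathlib

open MeasureTheory Real Set Filter Topology

noncomputable section

/-- The standard bubble `W_{1,0}` for `n = 3`, `γ = 1/2`:
`W(x) = 2((1 + x₄)² + x₁² + x₂² + x₃²)⁻¹`. -/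
def Wb (x : Fin 4 → ℝ) : ℝ :=
  2 * ((1 + x 3) ^ 2 + (x 0) ^ 2 + (x 1) ^ 2 + (x 2) ^ 2)⁻¹

/-- The upper half-ball `B⁴₊(0,R)`. -/
def hBall (R : ℝ) : Set (Fin 4 → ℝ) := {x | (∑ i, (x i) ^ 2) < R ^ 2 ∧ 0 < x 3}

namespace St16

set_option linter.unusedVariables false
set_option linter.deprecated false

abbrev V := Fin 4 → ℝ

def Qf (x : V) : ℝ := (1 + x 3) ^ 2 + (x 0) ^ 2 + (x 1) ^ 2 + (x 2) ^ 2
def sqf (x : V) : ℝ := ∑ i, (x i) ^ 2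
def Ff (x : V) : ℝ := 16 * (x 3) ^ 2 * ((Qf x) ^ 3)⁻¹
def gf (x : V) : ℝ := 16 * (x 3) ^ 2 * ((sqf x) ^ 3)⁻¹
def hf (i : Fin 4) (x : V) : ℝ := (x i) ^ 2 * ((sqf x) ^ 3)⁻¹
def hB (R : ℝ) : Set V := {x | sqf x < R ^ 2 ∧ 0 < x 3}
def Ann (A R : ℝ) : Set V := {x | A ^ 2 ≤ sqf x ∧ sqf x < R ^ 2 ∧ 0 < x 3}
def AnnF (A R : ℝ) : Set V := {x | A ^ 2 ≤ sqf x ∧ sqf x < R ^ 2}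

/-! ### Derivative computation -/

def L (x : V) : V →L[ℝ] ℝ :=
  (2 * (1 + x 3)) • (ContinuousLinearMap.proj 3) + (2 * x 0) • (ContinuousLinearMap.proj 0)
    + (2 * x 1) • (ContinuousLinearMap.proj 1) + (2 * x 2) • (ContinuousLinearMap.proj 2)

lemma hasFDerivAt_Qf (x : V) : HasFDerivAt Qf (L x) x := by
  have h3 : HasFDerivAt (fun y : V => y 3) (ContinuousLinearMap.proj 3 : V →L[ℝ] ℝ) x :=
    (ContinuousLinearMap.proj 3 : V →L[ℝ] ℝ).hasFDerivAt
  have h0 : HasFDerivAt (fun y : V => y 0) (ContinuousLinearMap.proj 0 : V →L[ℝ] ℝ) x :=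
    (ContinuousLinearMap.proj 0 : V →L[ℝ] ℝ).hasFDerivAt
  have h1 : HasFDerivAt (fun y : V => y 1) (ContinuousLinearMap.proj 1 : V →L[ℝ] ℝ) x :=
    (ContinuousLinearMap.proj 1 : V →L[ℝ] ℝ).hasFDerivAt
  have h2 : HasFDerivAt (fun y : V => y 2) (ContinuousLinearMap.proj 2 : V →L[ℝ] ℝ) x :=
    (ContinuousLinearMap.proj 2 : V →L[ℝ] ℝ).hasFDerivAt
  have h3' := (h3.const_add 1).mul (h3.const_add 1)
  have h0' := h0.mul h0
  have h1' := h1.mul h1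
  have h2' := h2.mul h2
  have h := ((h3'.add h0').add h1').add h2'
  have : HasFDerivAt (fun y : V => (1 + y 3) * (1 + y 3) + y 0 * y 0 + y 1 * y 1 + y 2 * y 2)
      (L x) x := by
    refine h.congr_fderiv ?_
    unfold L
    ext v
    simp [ContinuousLinearMap.add_apply, ContinuousLinearMap.smul_apply]
    try ring
  convert this using 2 with y
  unfold Qf
  ring

lemma hasFDerivAt_Wb (x : V) (hQ : Qf x ≠ 0) :
    HasFDerivAt Wb ((2 * (-(Qf x ^ 2)⁻¹)) • L x) x := by
  have hinv := (hasDerivAt_inv hQ).comp_hasFDerivAt x (hasFDerivAt_Qf x)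
  have h := hinv.const_mul (2:ℝ)
  have : HasFDerivAt (fun y : V => 2 * (Qf y)⁻¹) ((2 * -(Qf x ^ 2)⁻¹) • L x) x := by
    refine h.congr_fderiv ?_
    rw [smul_smul]
  exact this

lemma sum_sq_fderiv (x : V) (hQ : Qf x ≠ 0) :
    ∑ a : Fin 4, (fderiv ℝ Wb x (Pi.single a 1)) ^ 2 = 16 * ((Qf x) ^ 3)⁻¹ := by
  rw [(hasFDerivAt_Wb x hQ).fderiv]
  have e0 : ∀ a : Fin 4, (L x) (Pi.single a 1) =
      2 * (1 + x 3) * (Pi.single a 1 : V) 3 + 2 * x 0 * (Pi.single a 1 : V) 0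
      + 2 * x 1 * (Pi.single a 1 : V) 1 + 2 * x 2 * (Pi.single a 1 : V) 2 := by
    intro a
    simp [L, ContinuousLinearMap.add_apply, ContinuousLinearMap.smul_apply]
    try ring
  simp only [ContinuousLinearMap.coe_smul', Pi.smul_apply, smul_eq_mul, Fin.sum_univ_four, e0]
  have Qpos : (Qf x)^2 ≠ 0 := pow_ne_zero _ hQ
  have Q3 : (Qf x)^3 ≠ 0 := pow_ne_zero _ hQ
  simp [Pi.single_apply]
  try field_simp
  try (unfold Qf; ring)

/-! ### Measurability and elementary bounds -/

lemma measurable_sqf : Measurable sqf := by unfold sqf; fun_prop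
lemma measurable_Ff : Measurable Ff := by unfold Ff Qf; fun_prop
lemma measurable_gf : Measurable gf := by unfold gf sqf; fun_prop
lemma measurable_hf (i : Fin 4) : Measurable (hf i) := by unfold hf sqf; fun_prop

lemma meas_hB (R : ℝ) : MeasurableSet (hB R) := by
  have : hB R = {x : V | sqf x < R ^ 2} ∩ {x : V | 0 < x 3} := rfl
  rw [this]
  exact (measurableSet_lt measurable_sqf measurable_const).inter
    (measurableSet_lt measurable_const (measurable_pi_apply 3))

lemma meas_AnnF (A R : ℝ) : MeasurableSet (AnnF A R) := by
  have : AnnF A R = {x : V | A ^ 2 ≤ sqf x} ∩ {x : V | sqf x < R ^ 2} := rfl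
  rw [this]
  exact (measurableSet_le measurable_const measurable_sqf).inter
    (measurableSet_lt measurable_sqf measurable_const)

lemma meas_Ann (A R : ℝ) : MeasurableSet (Ann A R) := by
  have : Ann A R = AnnF A R ∩ {x : V | 0 < x 3} := by ext x; simp [Ann, AnnF]; tauto
  rw [this]
  exact (meas_AnnF A R).inter (measurableSet_lt measurable_const (measurable_pi_apply 3))

lemma sq_le_sqf (x : V) (i : Fin 4) : (x i) ^ 2 ≤ sqf x := by
  unfold sqf
  exact Finset.single_le_sum (f := fun j => (x j) ^ 2) (fun j _ => sq_nonneg _)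
    (Finset.mem_univ i)

lemma sqf_nonneg (x : V) : 0 ≤ sqf x := Finset.sum_nonneg fun j _ => sq_nonneg _

lemma Qf_eq (x : V) : Qf x = sqf x + 2 * x 3 + 1 := by
  simp [Qf, sqf, Fin.sum_univ_four]; ring

lemma subset_ball (R : ℝ) : {x : V | sqf x < R ^ 2} ⊆ Metric.ball (0 : V) (|R| + 1) := by
  intro x hx
  simp only [mem_setOf_eq] at hx
  rw [Metric.mem_ball, dist_zero_right]
  have hpos : (0:ℝ) < |R| + 1 := by positivity
  rw [pi_norm_lt_iff hpos]
  intro i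
  rw [Real.norm_eq_abs]
  have h1 : (x i) ^ 2 < (|R| + 1) ^ 2 := by
    calc (x i) ^ 2 ≤ sqf x := sq_le_sqf x i
    _ < R ^ 2 := hx
    _ ≤ (|R| + 1) ^ 2 := by nlinarith [abs_nonneg R, sq_abs R]
  nlinarith [abs_nonneg (x i), sq_abs (x i)]

lemma vol_lt_top {s : Set V} {R : ℝ} (hs : s ⊆ {x : V | sqf x < R ^ 2}) : volume s < ⊤ :=
  lt_of_le_of_lt (measure_mono (hs.trans (subset_ball R))) measure_ball_lt_top

lemma Ff_nonneg (x : V) : 0 ≤ Ff x := by unfold Ff Qf; positivity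

lemma gf_nonneg (x : V) : 0 ≤ gf x := by
  have := sqf_nonneg x
  unfold gf; positivity

lemma Qf_pos (x : V) (h3 : 0 < x 3) : 1 ≤ Qf x := by
  unfold Qf; nlinarith [sq_nonneg (x 0), sq_nonneg (x 1), sq_nonneg (x 2)]

lemma Ff_le (x : V) (h3 : 0 < x 3) : Ff x ≤ 16 := by
  have hQ1 : 1 ≤ Qf x := Qf_pos x h3
  have hx : (x 3) ^ 2 ≤ Qf x := by unfold Qf; nlinarith
  have h3p : (0:ℝ) < Qf x ^ 3 := by positivity
  have hxQ : (x 3) ^ 2 ≤ Qf x ^ 3 := le_trans hx (le_self_pow₀ hQ1 (by norm_num))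
  have : (x 3) ^ 2 * (Qf x ^ 3)⁻¹ ≤ 1 := by
    rw [← div_eq_mul_inv]; exact (div_le_one h3p).mpr hxQ
  unfold Ff; nlinarith

/-! ### Integrability -/

lemma intOn_Ff (R : ℝ) : IntegrableOn Ff (hB R) := by
  apply Measure.integrableOn_of_bounded (M := 16)
  · exact (vol_lt_top (fun x hx => hx.1)).ne
  · exact measurable_Ff.aestronglyMeasurable
  · apply ae_restrict_of_forall_mem (meas_hB R)
    intro x hx
    rw [Real.norm_eq_abs, abs_of_nonneg (Ff_nonneg x)]
    exact Ff_le x hx.2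

lemma intOn_Ff_Ann (A R : ℝ) : IntegrableOn Ff (Ann A R) := by
  apply Measure.integrableOn_of_bounded (M := 16)
  · exact (vol_lt_top (fun x hx => hx.2.1)).ne
  · exact measurable_Ff.aestronglyMeasurable
  · apply ae_restrict_of_forall_mem (meas_Ann A R)
    intro x hx
    rw [Real.norm_eq_abs, abs_of_nonneg (Ff_nonneg x)]
    exact Ff_le x hx.2.2

lemma gf_le (x : V) (hA : 1 ≤ sqf x) : gf x ≤ 16 := by
  have hx : (x 3) ^ 2 ≤ sqf x := sq_le_sqf x 3
  have hsp : (0:ℝ) < sqf x ^ 3 := by positivity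
  have hxs : (x 3) ^ 2 ≤ sqf x ^ 3 := le_trans hx (le_self_pow₀ hA (by norm_num))
  have : (x 3) ^ 2 * (sqf x ^ 3)⁻¹ ≤ 1 := by
    rw [← div_eq_mul_inv]; exact (div_le_one hsp).mpr hxs
  unfold gf; nlinarith

lemma hf_le (x : V) (i : Fin 4) (hA : 1 ≤ sqf x) : hf i x ≤ 1 := by
  have hx : (x i) ^ 2 ≤ sqf x := sq_le_sqf x i
  have hsp : (0:ℝ) < sqf x ^ 3 := by positivity
  have hxs : (x i) ^ 2 ≤ sqf x ^ 3 := le_trans hx (le_self_pow₀ hA (by norm_num))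
  have : (x i) ^ 2 * (sqf x ^ 3)⁻¹ ≤ 1 := by
    rw [← div_eq_mul_inv]; exact (div_le_one hsp).mpr hxs
  unfold hf; nlinarith

lemma hf_nonneg (x : V) (i : Fin 4) : 0 ≤ hf i x := by
  have := sqf_nonneg x
  unfold hf; positivity

lemma intOn_gf (A R : ℝ) (hA : 1 ≤ A) : IntegrableOn gf (AnnF A R) := by
  apply Measure.integrableOn_of_bounded (M := 16)
  · exact (vol_lt_top (fun x hx => hx.2)).ne
  · exact measurable_gf.aestronglyMeasurable
  · apply ae_restrict_of_forall_mem (meas_AnnF A R)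
    intro x hx
    rw [Real.norm_eq_abs, abs_of_nonneg (gf_nonneg x)]
    exact gf_le x (le_trans (by nlinarith) hx.1)

lemma intOn_gf_Ann (A R : ℝ) (hA : 1 ≤ A) : IntegrableOn gf (Ann A R) :=
  (intOn_gf A R hA).mono_set (fun x hx => ⟨hx.1, hx.2.1⟩)

lemma intOn_hf (A R : ℝ) (hA : 1 ≤ A) (i : Fin 4) : IntegrableOn (hf i) (AnnF A R) := by
  apply Measure.integrableOn_of_bounded (M := 1)
  · exact (vol_lt_top (fun x hx => hx.2)).ne
  · exact (measurable_hf i).aestronglyMeasurable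
  · apply ae_restrict_of_forall_mem (meas_AnnF A R)
    intro x hx
    rw [Real.norm_eq_abs, abs_of_nonneg (hf_nonneg x i)]
    exact hf_le x i (le_trans (by nlinarith) hx.1)

/-! ### Splitting -/

lemma hB_split (A R : ℝ) (h0 : 0 < A) (hAR : A ≤ R) : hB R = hB A ∪ Ann A R := by
  ext x
  simp only [hB, Ann, mem_setOf_eq, mem_union]
  constructor
  · rintro ⟨h1, h2⟩
    rcases lt_or_ge (sqf x) (A ^ 2) with h | h
    · exact Or.inl ⟨h, h2⟩
    · exact Or.inr ⟨h, h1, h2⟩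
  · rintro (⟨h1, h2⟩ | ⟨h1, h2, h3⟩)
    · exact ⟨lt_of_lt_of_le h1 (by nlinarith), h2⟩
    · exact ⟨h2, h3⟩

lemma hB_disj (A R : ℝ) : Disjoint (hB A) (Ann A R) := by
  rw [Set.disjoint_left]
  rintro x ⟨h1, _⟩ ⟨h2, _⟩
  exact absurd h2 (not_le.mpr h1)

lemma integral_split (A R : ℝ) (h0 : 0 < A) (hAR : A ≤ R) :
    ∫ x in hB R, Ff x = (∫ x in hB A, Ff x) + ∫ x in Ann A R, Ff x := by
  rw [hB_split A R h0 hAR]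
  exact setIntegral_union (hB_disj A R) (meas_Ann A R) (intOn_Ff A) (intOn_Ff_Ann A R)

/-! ### Pointwise comparison of `Ff` and `gf` on annuli -/

lemma Ff_le_gf {A R : ℝ} (hA : 0 < A) {x : V} (hx : x ∈ Ann A R) : Ff x ≤ gf x := by
  obtain ⟨h1, _, h3⟩ := hx
  have hs : 0 < sqf x := lt_of_lt_of_le (by positivity) h1
  have hQ : sqf x ≤ Qf x := by rw [Qf_eq]; nlinarith
  have hs3 : (0:ℝ) < sqf x ^ 3 := by positivity
  have h6 : sqf x ^ 3 ≤ Qf x ^ 3 := pow_le_pow_left₀ (le_of_lt hs) hQ 3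
  have hinv : (Qf x ^ 3)⁻¹ ≤ (sqf x ^ 3)⁻¹ := inv_anti₀ hs3 h6
  unfold Ff gf
  exact mul_le_mul_of_nonneg_left hinv (by positivity)

lemma gf_le_Ff {A R : ℝ} (hA : 1 ≤ A) {x : V} (hx : x ∈ Ann A R) :
    ((1 + A⁻¹) ^ 6)⁻¹ * gf x ≤ Ff x := by
  obtain ⟨h1, _, h3⟩ := hx
  have hA0 : (0:ℝ) < A := lt_of_lt_of_le one_pos hA
  have hs1 : (1:ℝ) ≤ sqf x := le_trans (by nlinarith) h1
  have hs : 0 < sqf x := lt_of_lt_of_le one_pos hs1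
  set s := sqf x with hsdef
  have hsq : Real.sqrt s ^ 2 = s := Real.sq_sqrt (le_of_lt hs)
  have hAs : A ≤ Real.sqrt s := by
    rw [show A = Real.sqrt (A^2) from (Real.sqrt_sq (le_of_lt hA0)).symm]
    exact Real.sqrt_le_sqrt h1
  have hx3 : x 3 ≤ Real.sqrt s := by
    rw [show x 3 = Real.sqrt ((x 3)^2) from (Real.sqrt_sq (le_of_lt h3)).symm]
    exact Real.sqrt_le_sqrt (sq_le_sqf x 3)
  have hsA : 1 ≤ Real.sqrt s / A := (one_le_div hA0).mpr hAs
  have hQle : Qf x ≤ s * (1 + A⁻¹) ^ 2 := by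
    rw [Qf_eq]
    have key : Real.sqrt s + 1 ≤ Real.sqrt s * (1 + A⁻¹) := by
      have : Real.sqrt s * A⁻¹ = Real.sqrt s / A := by ring
      nlinarith [Real.sqrt_nonneg s]
    have key2 : (Real.sqrt s + 1)^2 ≤ (Real.sqrt s * (1 + A⁻¹))^2 :=
      pow_le_pow_left₀ (by positivity) key 2
    calc s + 2 * x 3 + 1 ≤ s + 2 * Real.sqrt s + 1 := by nlinarith
    _ = (Real.sqrt s + 1)^2 := by nlinarith [hsq]
    _ ≤ (Real.sqrt s * (1 + A⁻¹))^2 := key2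
    _ = s * (1 + A⁻¹) ^ 2 := by rw [mul_pow, hsq]
  have hQ3 : Qf x ^ 3 ≤ s ^ 3 * ((1 + A⁻¹) ^ 6) := by
    calc Qf x ^ 3 ≤ (s * (1 + A⁻¹) ^ 2) ^ 3 := by
          apply pow_le_pow_left₀ _ hQle
          rw [Qf_eq]; nlinarith
    _ = s ^ 3 * ((1 + A⁻¹) ^ 6) := by ring
  have hQpos : (0:ℝ) < Qf x ^ 3 := by
    have : 0 < Qf x := by rw [Qf_eq]; nlinarith
    positivity
  have hinv : (s ^ 3 * ((1 + A⁻¹) ^ 6))⁻¹ ≤ (Qf x ^ 3)⁻¹ := inv_anti₀ hQpos hQ3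
  unfold Ff gf
  rw [show ((1 + A⁻¹) ^ 6)⁻¹ * (16 * x 3 ^ 2 * (sqf x ^ 3)⁻¹)
      = 16 * x 3 ^ 2 * ((sqf x ^ 3) * ((1 + A⁻¹) ^ 6))⁻¹ by rw [mul_inv]; ring]
  exact mul_le_mul_of_nonneg_left hinv (by positivity)

/-! ### Symmetry and reflection -/

lemma swap_integral (A R : ℝ) (i : Fin 4) :
    ∫ x in AnnF A R, hf i x = ∫ x in AnnF A R, hf 3 x := by
  set σ : Fin 4 ≃ Fin 4 := Equiv.swap i 3 with hσdef
  set T := MeasurableEquiv.piCongrLeft (fun _ : Fin 4 => ℝ) σ with hTdef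
  have hT : MeasurePreserving T volume volume :=
    volume_measurePreserving_piCongrLeft _ σ
  have hTx : ∀ (x : V) (j : Fin 4), T x j = x (σ j) := by
    intro x j
    have h1 : σ (σ j) = j := Equiv.swap_apply_self i 3 j
    conv_lhs => rw [← h1]
    exact MeasurableEquiv.piCongrLeft_apply_apply (β := fun _ : Fin 4 => ℝ) σ x (σ j)
  have hsqf : ∀ x : V, sqf (T x) = sqf x := by
    intro x
    unfold sqf
    simp only [hTx]
    exact Equiv.sum_comp σ (fun j => (x j) ^ 2)
  have hσ3 : σ 3 = i := Equiv.swap_apply_right i 3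
  rw [← integral_indicator (meas_AnnF A R), ← integral_indicator (meas_AnnF A R)]
  rw [← hT.integral_comp T.measurableEmbedding ((AnnF A R).indicator (hf 3))]
  congr 1
  ext x
  classical
  have hmem : T x ∈ AnnF A R ↔ x ∈ AnnF A R := by
    unfold AnnF; simp [hsqf x]
  rw [Set.indicator_apply, Set.indicator_apply]
  by_cases hx : x ∈ AnnF A R
  · rw [if_pos (hmem.mpr hx), if_pos hx]
    unfold hf
    rw [hsqf x, hTx x 3, hσ3]
  · rw [if_neg (fun h => hx (hmem.mp h)), if_neg hx]

lemma sqf_neg (x : V) : sqf (-x) = sqf x := by unfold sqf; simp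

lemma reflect_integral (A R : ℝ) (hint : IntegrableOn (hf 3) (AnnF A R)) :
    ∫ x in AnnF A R, hf 3 x = 2 * ∫ x in Ann A R, hf 3 x := by
  set N : Set V := AnnF A R ∩ {x | x 3 < 0} with hNdef
  set Z : Set V := AnnF A R ∩ {x | x 3 = 0} with hZdef
  have measN : MeasurableSet N :=
    (meas_AnnF A R).inter (measurableSet_lt (measurable_pi_apply 3) measurable_const)
  have measZ : MeasurableSet Z :=
    (meas_AnnF A R).inter ((measurable_pi_apply 3) (measurableSet_singleton 0))
  have hsplit : AnnF A R = (N ∪ Z) ∪ Ann A R := by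
    ext x
    simp only [hNdef, hZdef, AnnF, Ann, mem_union, mem_inter_iff, mem_setOf_eq]
    constructor
    · intro h
      rcases lt_trichotomy (x 3) 0 with h3 | h3 | h3
      · exact Or.inl (Or.inl ⟨h, h3⟩)
      · exact Or.inl (Or.inr ⟨h, h3⟩)
      · exact Or.inr ⟨h.1, h.2, h3⟩
    · rintro ((⟨h, _⟩ | ⟨h, _⟩) | ⟨h1, h2, _⟩)
      · exact h
      · exact h
      · exact ⟨h1, h2⟩
  have hdisj1 : Disjoint (N ∪ Z) (Ann A R) := by
    rw [Set.disjoint_left]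
    rintro x (⟨_, h⟩ | ⟨_, h⟩) ⟨_, _, h3⟩
    · exact absurd h3 (not_lt.mpr (le_of_lt h))
    · exact absurd h3 (not_lt.mpr (le_of_eq h))
  have hdisj2 : Disjoint N Z := by
    rw [Set.disjoint_left]
    rintro x ⟨_, h⟩ ⟨_, h'⟩
    exact absurd h' (ne_of_lt h)
  have hintN : IntegrableOn (hf 3) N := hint.mono_set inter_subset_left
  have hintZ : IntegrableOn (hf 3) Z := hint.mono_set inter_subset_left
  have hintP : IntegrableOn (hf 3) (Ann A R) := hint.mono_set (fun x hx => ⟨hx.1, hx.2.1⟩)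
  have hZ0 : ∫ x in Z, hf 3 x = 0 := by
    apply setIntegral_eq_zero_of_forall_eq_zero
    rintro x ⟨_, hx⟩
    unfold hf
    simp only [mem_setOf_eq] at hx
    rw [hx]; ring
  have hrefl : ∫ x in N, hf 3 x = ∫ x in Ann A R, hf 3 x := by
    have hmp : MeasurePreserving (fun x : V => -x) volume volume :=
      Measure.measurePreserving_neg volume
    have hemb : MeasurableEmbedding (fun x : V => -x) :=
      (MeasurableEquiv.neg V).measurableEmbedding
    rw [← integral_indicator measN, ← integral_indicator (meas_Ann A R)]
    rw [← hmp.integral_comp hemb (N.indicator (hf 3))]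
    congr 1
    ext x
    classical
    have hmem : -x ∈ N ↔ x ∈ Ann A R := by
      simp only [hNdef, AnnF, Ann, mem_inter_iff, mem_setOf_eq, sqf_neg]
      have : (-x) 3 = -(x 3) := rfl
      rw [this]
      constructor
      · rintro ⟨⟨h1, h2⟩, h3⟩; exact ⟨h1, h2, by linarith⟩
      · rintro ⟨h1, h2, h3⟩; exact ⟨⟨h1, h2⟩, by linarith⟩
    rw [Set.indicator_apply, Set.indicator_apply]
    by_cases hx : x ∈ Ann A R
    · rw [if_pos (hmem.mpr hx), if_pos hx]
      unfold hf
      rw [sqf_neg]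
      have : (-x) 3 = -(x 3) := rfl
      rw [this]; ring
    · rw [if_neg (fun h => hx (hmem.mp h)), if_neg hx]
  rw [hsplit]
  rw [setIntegral_union hdisj1 (meas_Ann A R) (hintN.union hintZ) hintP,
      setIntegral_union hdisj2 measZ hintN hintZ, hZ0, hrefl]
  ring

/-! ### Radial computation -/

lemma radial_compute (A R : ℝ) (hA : 1 ≤ A) (hAR : A ≤ R) :
    ∫ x in AnnF A R, ((sqf x) ^ 2)⁻¹ = 2 * π ^ 2 * (Real.log R - Real.log A) := by
  classical
  have hA0 : (0:ℝ) < A := lt_of_lt_of_le one_pos hA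
  have hR0 : (0:ℝ) < R := lt_of_lt_of_le hA0 hAR
  set e := (MeasurableEquiv.toLp 2 (Fin 4 → ℝ)).symm with hedef
  have hmp : MeasurePreserving e volume volume :=
    EuclideanSpace.volume_preserving_symm_measurableEquiv_toLp (Fin 4)
  set g : V → ℝ := (AnnF A R).indicator (fun x => ((sqf x) ^ 2)⁻¹) with hgdef
  set f : ℝ → ℝ := (Ico A R).indicator (fun r => (r ^ 4)⁻¹) with hfdef
  have hge : ∀ y : EuclideanSpace ℝ (Fin 4), g (e y) = f ‖y‖ := by
    intro y
    have hey : ∀ j, e y j = y j := fun j => rfl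
    have hsq : sqf (e y) = ‖y‖ ^ 2 := by
      rw [EuclideanSpace.norm_eq, Real.sq_sqrt (by positivity)]
      unfold sqf
      congr 1
      ext j
      rw [hey j, Real.norm_eq_abs, sq_abs]
    have hnn : 0 ≤ ‖y‖ := norm_nonneg y
    have hmem : e y ∈ AnnF A R ↔ ‖y‖ ∈ Ico A R := by
      unfold AnnF
      simp only [mem_setOf_eq, hsq, mem_Ico]
      constructor
      · rintro ⟨h1, h2⟩
        exact ⟨by nlinarith, by nlinarith⟩
      · rintro ⟨h1, h2⟩
        exact ⟨by nlinarith, by nlinarith⟩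
    rw [hgdef, hfdef, Set.indicator_apply, Set.indicator_apply]
    by_cases hy : ‖y‖ ∈ Ico A R
    · rw [if_pos (hmem.mpr hy), if_pos hy, hsq]
      rw [← pow_mul]
    · rw [if_neg (fun h => hy (hmem.mp h)), if_neg hy]
  have step1 : ∫ x in AnnF A R, ((sqf x) ^ 2)⁻¹ = ∫ y : EuclideanSpace ℝ (Fin 4), f ‖y‖ := by
    rw [← integral_indicator (meas_AnnF A R), ← hgdef]
    rw [← hmp.integral_comp e.measurableEmbedding g]
    congr 1
    ext y
    exact hge y
  rw [step1, integral_fun_norm_addHaar (volume : Measure (EuclideanSpace ℝ (Fin 4))) f]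
  have hdim : Module.finrank ℝ (EuclideanSpace ℝ (Fin 4)) = 4 := by
    simp [finrank_euclideanSpace]
  rw [hdim]
  have hball : ((volume : Measure (EuclideanSpace ℝ (Fin 4))) (Metric.ball 0 1)).toReal
      = π ^ 2 / 2 := by
    rw [EuclideanSpace.volume_ball]
    have hcard : Fintype.card (Fin 4) = 4 := by simp
    rw [hcard]
    have h1 : Real.sqrt π ^ 4 = π ^ 2 := by
      rw [show (4:ℕ) = 2 * 2 from rfl, pow_mul, Real.sq_sqrt Real.pi_nonneg]
    have h2 : Real.Gamma (3:ℝ) = 2 := by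
      rw [show (3:ℝ) = ((2:ℕ) : ℝ) + 1 by norm_num, Real.Gamma_nat_eq_factorial]
      norm_num
    rw [show (((4:ℕ):ℝ) / 2 + 1) = (3:ℝ) by norm_num, h1, h2]
    simp only [ENNReal.ofReal_one, one_pow, one_mul]
    rw [ENNReal.toReal_ofReal (by positivity)]
  rw [measureReal_def, hball]
  have hrad : ∫ y in Ioi (0:ℝ), y ^ (4 - 1) • f y = Real.log R - Real.log A := by
    have hind : ∀ y : ℝ,
        y ^ (4-1) • f y = ((Ico A R).indicator (fun r => r ^ 3 * (r ^ 4)⁻¹)) y := by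
      intro y
      rw [hfdef, Set.indicator_apply, Set.indicator_apply]
      by_cases hy : y ∈ Ico A R
      · rw [if_pos hy, if_pos hy]; norm_num
      · rw [if_neg hy, if_neg hy]; simp
    rw [show (∫ y in Ioi (0:ℝ), y ^ (4 - 1) • f y)
        = ∫ y in Ioi (0:ℝ), ((Ico A R).indicator (fun r => r ^ 3 * (r ^ 4)⁻¹)) y from
      integral_congr_ae (Eventually.of_forall hind)]
    rw [integral_indicator measurableSet_Ico, Measure.restrict_restrict measurableSet_Ico]
    rw [show Ico A R ∩ Ioi 0 = Ico A R from
      inter_eq_self_of_subset_left (fun r (hr : r ∈ Ico A R) => lt_of_lt_of_le hA0 hr.1)]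
    rw [setIntegral_congr_fun measurableSet_Ico (g := fun r : ℝ => r⁻¹) ?hcong]
    case hcong =>
      intro r hr
      have hr0 : r ≠ 0 := ne_of_gt (lt_of_lt_of_le hA0 hr.1)
      field_simp
    rw [integral_Ico_eq_integral_Ioo, ← integral_Ioc_eq_integral_Ioo,
        ← intervalIntegral.integral_of_le hAR]
    rw [integral_inv (by
      intro h
      rcases h with ⟨h1, h2⟩
      rw [inf_le_iff] at h1
      rcases h1 with h1 | h1 <;> linarith)]
    exact Real.log_div (ne_of_gt hR0) (ne_of_gt hA0)
  rw [hrad]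
  rw [nsmul_eq_mul, smul_eq_mul]
  ring

/-! ### The value of the model integral on annuli -/

lemma G_val (A R : ℝ) (hA : 1 ≤ A) (hAR : A ≤ R) :
    ∫ x in Ann A R, gf x = 4 * π ^ 2 * (Real.log R - Real.log A) := by
  have hA0 : (0:ℝ) < A := lt_of_lt_of_le one_pos hA
  -- sum of the four coordinate integrals over the full annulus
  have hsum : ∑ i : Fin 4, ∫ x in AnnF A R, hf i x
      = ∫ x in AnnF A R, ((sqf x) ^ 2)⁻¹ := by
    rw [← integral_finset_sum Finset.univ (fun i _ => intOn_hf A R hA i)]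
    apply setIntegral_congr_fun (meas_AnnF A R)
    intro x hx
    have hs1 : (1:ℝ) ≤ sqf x := le_trans (by nlinarith) hx.1
    have hs0 : sqf x ≠ 0 := ne_of_gt (lt_of_lt_of_le one_pos hs1)
    show ∑ i : Fin 4, hf i x = ((sqf x) ^ 2)⁻¹
    unfold hf
    rw [← Finset.sum_mul]
    have : ∑ i : Fin 4, (x i) ^ 2 = sqf x := rfl
    rw [this]
    field_simp
  have hswap : ∑ i : Fin 4, ∫ x in AnnF A R, hf i x = 4 * ∫ x in AnnF A R, hf 3 x := by
    rw [Fin.sum_univ_four, swap_integral A R 0, swap_integral A R 1, swap_integral A R 2]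
    ring
  have h3val : ∫ x in AnnF A R, hf 3 x = (π ^ 2 / 2) * (Real.log R - Real.log A) := by
    have := hsum
    rw [hswap, radial_compute A R hA hAR] at this
    linarith
  have hrefl := reflect_integral A R (intOn_hf A R hA 3)
  have hAnn3 : ∫ x in Ann A R, hf 3 x = (π ^ 2 / 4) * (Real.log R - Real.log A) := by
    rw [h3val] at hrefl
    linarith
  have : ∫ x in Ann A R, gf x = 16 * ∫ x in Ann A R, hf 3 x := by
    rw [← integral_const_mul]
    apply setIntegral_congr_fun (meas_Ann A R)
    intro x hx
    unfold gf hf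
    ring
  rw [this, hAnn3]
  ring

/-! ### Bounds on the energy integral -/

lemma upper_bound (R : ℝ) (hR : 1 ≤ R) :
    ∫ x in hB R, Ff x ≤ (∫ x in hB 1, Ff x) + 4 * π ^ 2 * Real.log R := by
  rw [integral_split 1 R one_pos hR]
  have h1 : ∫ x in Ann 1 R, Ff x ≤ ∫ x in Ann 1 R, gf x := by
    apply setIntegral_mono_on (intOn_Ff_Ann 1 R) (intOn_gf_Ann 1 R le_rfl) (meas_Ann 1 R)
    intro x hx
    exact Ff_le_gf one_pos hx
  have h2 : ∫ x in Ann 1 R, gf x = 4 * π ^ 2 * Real.log R := by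
    rw [G_val 1 R le_rfl hR, Real.log_one]
    ring
  linarith

lemma lower_bound (A R : ℝ) (hA : 1 ≤ A) (hAR : A ≤ R) :
    ((1 + A⁻¹) ^ 6)⁻¹ * (4 * π ^ 2 * (Real.log R - Real.log A)) ≤ ∫ x in hB R, Ff x := by
  have hA0 : (0:ℝ) < A := lt_of_lt_of_le one_pos hA
  rw [integral_split A R hA0 hAR]
  have h0 : 0 ≤ ∫ x in hB A, Ff x :=
    setIntegral_nonneg (meas_hB A) (fun x _ => Ff_nonneg x)
  have h1 : ∫ x in Ann A R, ((1 + A⁻¹) ^ 6)⁻¹ * gf x ≤ ∫ x in Ann A R, Ff x := by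
    apply setIntegral_mono_on _ (intOn_Ff_Ann A R) (meas_Ann A R)
    · intro x hx
      exact gf_le_Ff hA hx
    · exact (intOn_gf_Ann A R hA).const_mul _
  rw [integral_const_mul, G_val A R hA hAR] at h1
  linarith

/-! ### Identification of the integrand -/

lemma integrand_eq (R : ℝ) :
    ∫ x in hBall R, (x 3) ^ 2 * ∑ a : Fin 4, (fderiv ℝ Wb x (Pi.single a 1)) ^ 2
      = ∫ x in hB R, Ff x := by
  have hBB : hBall R = hB R := rfl
  rw [hBB]
  apply setIntegral_congr_fun (meas_hB R)
  intro x hx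
  have hQ : Qf x ≠ 0 := ne_of_gt (lt_of_lt_of_le one_pos (Qf_pos x hx.2))
  show (x 3) ^ 2 * ∑ a : Fin 4, (fderiv ℝ Wb x (Pi.single a 1)) ^ 2 = Ff x
  rw [sum_sq_fderiv x hQ]
  unfold Ff
  ring

end St16

open St16 in
/-- `lim_{R→∞} (log R)⁻¹ ∫_{B⁴₊(0,R)} x₄² |∇W|² dx = 4π²`: the weighted energy of the
bubble diverges logarithmically with rate `4π²`. -/
theorem statement16 :
    Tendsto (fun R : ℝ =>
        (Real.log R)⁻¹ * ∫ x in hBall R,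
          (x 3) ^ 2 * ∑ a : Fin 4, (fderiv ℝ Wb x (Pi.single a 1)) ^ 2)
      atTop (nhds (4 * Real.pi ^ 2)) := by
  have hfun : (fun R : ℝ =>
      (Real.log R)⁻¹ * ∫ x in hBall R,
        (x 3) ^ 2 * ∑ a : Fin 4, (fderiv ℝ Wb x (Pi.single a 1)) ^ 2)
      = fun R : ℝ => (Real.log R)⁻¹ * ∫ x in hB R, Ff x := by
    funext R
    rw [integrand_eq R]
  rw [hfun]
  set C₁ : ℝ := ∫ x in hB 1, Ff x with hC₁def
  have hC₁ : 0 ≤ C₁ := setIntegral_nonneg (meas_hB 1) (fun x _ => Ff_nonneg x)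
  rw [Metric.tendsto_nhds]
  intro ε hε
  -- choose A large
  have htA : Tendsto (fun A : ℝ => 4 * π ^ 2 * (1 - ((1 + A⁻¹) ^ 6)⁻¹)) atTop (𝓝 0) := by
    have hc : ContinuousAt (fun t : ℝ => 4 * π ^ 2 * (1 - ((1 + t) ^ 6)⁻¹)) 0 := by
      apply ContinuousAt.mul continuousAt_const
      apply ContinuousAt.sub continuousAt_const
      exact ContinuousAt.inv₀ (ContinuousAt.pow (continuousAt_const.add continuousAt_id) 6)
        (by norm_num)
    have := hc.tendsto.comp tendsto_inv_atTop_zero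
    simp only [Function.comp_def, add_zero] at this
    convert this using 2
    norm_num
  obtain ⟨A, hA1, hAsmall⟩ :
      ∃ A : ℝ, 1 ≤ A ∧ 4 * π ^ 2 * (1 - ((1 + A⁻¹) ^ 6)⁻¹) < ε / 2 := by
    have h1 := htA.eventually_lt_const (show (0:ℝ) < ε / 2 by positivity)
    have h2 := eventually_ge_atTop (1:ℝ)
    exact ((h2.and h1).exists).imp (fun A h => ⟨h.1, h.2⟩)
  set c : ℝ := ((1 + A⁻¹) ^ 6)⁻¹ with hcdef
  have hA0 : (0:ℝ) < A := lt_of_lt_of_le one_pos hA1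
  have hc0 : 0 < c := by positivity
  have hc1 : c ≤ 1 := by
    rw [hcdef]
    have hAi : (0:ℝ) ≤ A⁻¹ := by positivity
    have h1 : (1:ℝ) ≤ (1 + A⁻¹) ^ 6 := one_le_pow₀ (by linarith)
    exact inv_le_one_of_one_le₀ h1
  have hlogA : 0 ≤ Real.log A := Real.log_nonneg hA1
  -- eventual facts
  have htinv : Tendsto (fun R : ℝ => (Real.log R)⁻¹) atTop (𝓝 0) := by
    have := tendsto_inv_atTop_zero.comp Real.tendsto_log_atTop
    simpa [Function.comp_def] using this
  have hev1 : ∀ᶠ R : ℝ in atTop, 0 < Real.log R :=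
    Real.tendsto_log_atTop.eventually_gt_atTop 0
  have hev2 : ∀ᶠ R : ℝ in atTop, (Real.log R)⁻¹ * C₁ < ε := by
    have h0 : Tendsto (fun R : ℝ => (Real.log R)⁻¹ * C₁) atTop (𝓝 0) := by
      simpa using htinv.mul_const C₁
    exact h0.eventually_lt_const (show (0:ℝ) < ε by positivity)
  have hev3 : ∀ᶠ R : ℝ in atTop, c * (4 * π ^ 2) * Real.log A * (Real.log R)⁻¹ < ε / 2 := by
    have h0 : Tendsto (fun R : ℝ => c * (4 * π ^ 2) * Real.log A * (Real.log R)⁻¹) atTop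
        (𝓝 0) := by
      simpa using htinv.const_mul (c * (4 * π ^ 2) * Real.log A)
    exact h0.eventually_lt_const (show (0:ℝ) < ε / 2 by positivity)
  have hev4 : ∀ᶠ R : ℝ in atTop, max A 1 ≤ R := eventually_ge_atTop (max A 1)
  filter_upwards [hev1, hev2, hev3, hev4] with R hlogR hsmall1 hsmall3 hmax
  have hRA : A ≤ R := le_trans (le_max_left A 1) hmax
  have hR1 : 1 ≤ R := le_trans (le_max_right A 1) hmax
  set t : ℝ := (Real.log R)⁻¹ with htdef
  have ht0 : 0 < t := by positivity
  have htl : t * Real.log R = 1 := inv_mul_cancel₀ (ne_of_gt hlogR)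
  set I : ℝ := ∫ x in hB R, Ff x with hIdef
  have hup : I ≤ C₁ + 4 * π ^ 2 * Real.log R := upper_bound R hR1
  have hlow : c * (4 * π ^ 2 * (Real.log R - Real.log A)) ≤ I := lower_bound A R hA1 hRA
  have hup' : t * I ≤ t * C₁ + 4 * π ^ 2 := by
    have h := mul_le_mul_of_nonneg_left hup (le_of_lt ht0)
    have e2 : t * (C₁ + 4 * π ^ 2 * Real.log R) = t * C₁ + 4 * π ^ 2 * (t * Real.log R) := by
      ring
    rw [e2, htl, mul_one] at h
    exact h
  have hlow' : c * (4 * π ^ 2) - c * (4 * π ^ 2) * Real.log A * t ≤ t * I := by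
    have h := mul_le_mul_of_nonneg_left hlow (le_of_lt ht0)
    have e1 : t * (c * (4 * π ^ 2 * (Real.log R - Real.log A)))
        = c * (4 * π ^ 2) * (t * Real.log R) - c * (4 * π ^ 2) * Real.log A * t := by
      ring
    rw [e1, htl, mul_one] at h
    exact h
  rw [Real.dist_eq, abs_sub_lt_iff]
  have hπ : (0:ℝ) < 4 * π ^ 2 := by positivity
  constructor
  · -- t * I - 4π² < ε
    have : t * C₁ < ε := hsmall1
    linarith
  · -- 4π² - t * I < ε
    have h1 : 4 * π ^ 2 - c * (4 * π ^ 2) < ε / 2 := by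
      have : 4 * π ^ 2 * (1 - c) < ε / 2 := hAsmall
      linarith [mul_one (4 * π ^ 2)]
    nlinarith [hsmall3]
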